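/- For every finite word w over {0,1,2}, the following hold. Let z_j denote the j-th column of M_w (j = 0,1,2) and z = z_0 + z_1 + z_2. Then (1,1,1)z = S^(w) > 0 and tau_j := (1,1,1)(z_j + (1/3)z) > 0 for each j; and there exists a unique triple (b_0, b_1, b_2) in R^3 satisfying sum_{j=0}^{2} b_j (z_j + (1/3)z)/tau_j = z/((1,1,1)z). This unique solution is given by b_j = (1,1,1)((1/6)z + (1/2)z_j) / ((1,1,1)z) = b_j^(w), and it satisfies b_0 + b_1 + b_2 = 1. -/

import Mathlib

open Matrix BigOperators

/-- The matrix `M_0`. -/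
noncomputable def M0 : Matrix (Fin 3) (Fin 3) ℝ :=
  (1 / 15 : ℝ) • !![9, 0, 0; 2, 2, -1; 2, -1, 2]

/-- The matrix `M_1`. -/
noncomputable def M1 : Matrix (Fin 3) (Fin 3) ℝ :=
  (1 / 15 : ℝ) • !![2, 2, -1; 0, 9, 0; -1, 2, 2]

/-- The matrix `M_2`. -/
noncomputable def M2 : Matrix (Fin 3) (Fin 3) ℝ :=
  (1 / 15 : ℝ) • !![2, -1, 2; -1, 2, 2; 0, 0, 9]

/-- `Mmat i` is the matrix `M_i`. -/
noncomputable def Mmat : Fin 3 → Matrix (Fin 3) (Fin 3) ℝ := ![M0, M1, M2]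

/-- For a word `w = [w₁, ..., wₘ]`, `Mword w = M_{w₁} * ⋯ * M_{wₘ}`
(the empty word giving the identity matrix). -/
noncomputable def Mword (w : List (Fin 3)) : Matrix (Fin 3) (Fin 3) ℝ :=
  (w.map Mmat).prod

/-- The `j`-th column `z_j` of `M_w`, as a vector in `ℝ³`. -/
noncomputable def zcol (w : List (Fin 3)) (j : Fin 3) : Fin 3 → ℝ :=
  fun i => Mword w i j

/-- The vector `z = z₀ + z₁ + z₂`, the sum of the columns of `M_w`. -/
noncomputable def zvec (w : List (Fin 3)) : Fin 3 → ℝ :=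
  fun i => ∑ j : Fin 3, Mword w i j

/-- `c_j^(w)`, the `j`-th column sum of `M_w`, i.e. the `j`-th entry of `(1,1,1) M_w`. -/
noncomputable def cw (w : List (Fin 3)) (j : Fin 3) : ℝ :=
  ∑ i : Fin 3, Mword w i j

/-- `S^(w) = c₀^(w) + c₁^(w) + c₂^(w)`, the sum of all entries of `M_w`. -/
noncomputable def Sw (w : List (Fin 3)) : ℝ :=
  ∑ j : Fin 3, cw w j

/-- The weight `b_j^(w) = 1/6 + c_j^(w) / (2 S^(w))`. -/
noncomputable def bwt (w : List (Fin 3)) (j : Fin 3) : ℝ :=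
  1 / 6 + cw w j / (2 * Sw w)

/-- `τ_j = (1,1,1)(z_j + (1/3)z)`. -/
noncomputable def tauw (w : List (Fin 3)) (j : Fin 3) : ℝ :=
  ∑ i : Fin 3, (zcol w j i + (1 / 3) * zvec w i)

lemma M0_eq : M0 = !![3/5, 0, 0; 2/15, 2/15, -(1/15); 2/15, -(1/15), 2/15] := by
  ext i j
  fin_cases i <;> fin_cases j <;>
    simp [M0, Matrix.vecHead, Matrix.vecTail] <;> norm_num

lemma M1_eq : M1 = !![2/15, 2/15, -(1/15); 0, 3/5, 0; -(1/15), 2/15, 2/15] := by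
  ext i j
  fin_cases i <;> fin_cases j <;>
    simp [M1, Matrix.vecHead, Matrix.vecTail] <;> norm_num

lemma M2_eq : M2 = !![2/15, -(1/15), 2/15; -(1/15), 2/15, 2/15; 0, 0, 3/5] := by
  ext i j
  fin_cases i <;> fin_cases j <;>
    simp [M2, Matrix.vecHead, Matrix.vecTail] <;> norm_num

lemma Mword_append (w : List (Fin 3)) (i : Fin 3) :
    Mword (w ++ [i]) = Mword w * Mmat i := by
  simp [Mword]

lemma tau_rec (w : List (Fin 3)) (i j : Fin 3) :
    tauw (w ++ [i]) j = ∑ k : Fin 3, Mmat i j k * tauw w k := by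
  fin_cases i <;> fin_cases j <;>
    · simp [tauw, zcol, zvec, Mword_append, Matrix.mul_apply, Mmat, M0_eq, M1_eq, M2_eq,
        Matrix.vecHead, Matrix.vecTail, Fin.sum_univ_three]
      ring
lemma pos_of_q (a b c : ℝ) (h : a ^ 2 + b ^ 2 + c ^ 2 - 2 * (a * b + b * c + c * a) < 0)
    (h0 : 0 < a ∨ 0 < b ∨ 0 < c) : 0 < a ∧ 0 < b ∧ 0 < c := by
  have hab : 0 < a * b := by nlinarith [sq_nonneg (c - a - b)]
  have hbc : 0 < b * c := by nlinarith [sq_nonneg (a - b - c)]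
  have hca : 0 < c * a := by nlinarith [sq_nonneg (b - c - a)]
  rcases h0 with h | h | h
  · exact ⟨h, by nlinarith, by nlinarith⟩
  · exact ⟨by nlinarith, h, by nlinarith⟩
  · exact ⟨by nlinarith, by nlinarith, h⟩

/-- The invariant quadratic form. -/
noncomputable def Qf (w : List (Fin 3)) : ℝ :=
  tauw w 0 ^ 2 + tauw w 1 ^ 2 + tauw w 2 ^ 2 -
    2 * (tauw w 0 * tauw w 1 + tauw w 1 * tauw w 2 + tauw w 2 * tauw w 0)

lemma Qf_rec (w : List (Fin 3)) (i : Fin 3) : Qf (w ++ [i]) = Qf w / 25 := by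
  fin_cases i <;>
    · simp only [Qf, tau_rec, Fin.sum_univ_three]
      simp [Mmat, M0_eq, M1_eq, M2_eq, Matrix.vecHead, Matrix.vecTail]
      ring

lemma tau_pos (w : List (Fin 3)) : (∀ j : Fin 3, 0 < tauw w j) ∧ Qf w < 0 := by
  induction w using List.reverseRecOn with
  | nil =>
    have h : ∀ j : Fin 3, tauw [] j = 2 := by
      intro j
      fin_cases j <;>
        · simp [tauw, zcol, zvec, Mword, Matrix.one_apply, Fin.sum_univ_three]
          norm_num
    constructor
    · intro j; rw [h j]; norm_num
    · simp only [Qf, h 0, h 1, h 2]; norm_num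
  | append_singleton w i ih =>
    obtain ⟨hp, hq⟩ := ih
    have hq' : Qf (w ++ [i]) < 0 := by rw [Qf_rec]; linarith
    have hQ : tauw (w ++ [i]) 0 ^ 2 + tauw (w ++ [i]) 1 ^ 2 + tauw (w ++ [i]) 2 ^ 2 -
        2 * (tauw (w ++ [i]) 0 * tauw (w ++ [i]) 1 + tauw (w ++ [i]) 1 * tauw (w ++ [i]) 2 +
          tauw (w ++ [i]) 2 * tauw (w ++ [i]) 0) < 0 := hq'
    have h0 := hp 0; have h1 := hp 1; have h2 := hp 2
    have hone : 0 < tauw (w ++ [i]) 0 ∨ 0 < tauw (w ++ [i]) 1 ∨ 0 < tauw (w ++ [i]) 2 := by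
      fin_cases i
      · left
        rw [tau_rec]
        simp [Mmat, M0_eq, Matrix.vecHead, Matrix.vecTail, Fin.sum_univ_three]
        nlinarith
      · right; left
        rw [tau_rec]
        simp [Mmat, M1_eq, Matrix.vecHead, Matrix.vecTail, Fin.sum_univ_three]
        nlinarith
      · right; right
        rw [tau_rec]
        simp [Mmat, M2_eq, Matrix.vecHead, Matrix.vecTail, Fin.sum_univ_three]
        nlinarith
    obtain ⟨ha, hb, hc⟩ := pos_of_q _ _ _ hQ hone
    refine ⟨fun j => ?_, hq'⟩
    fin_cases j
    · exact ha
    · exact hb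
    · exact hc

lemma Sw_eq (w : List (Fin 3)) : Sw w = (tauw w 0 + tauw w 1 + tauw w 2) / 2 := by
  simp [Sw, cw, tauw, zcol, zvec, Fin.sum_univ_three]; ring

lemma tau_eq (w : List (Fin 3)) (j : Fin 3) : tauw w j = cw w j + Sw w / 3 := by
  simp [Sw, cw, tauw, zcol, zvec, Fin.sum_univ_three]; ring

lemma det_Mword (w : List (Fin 3)) : (Mword w).det ≠ 0 := by
  induction w with
  | nil => simp [Mword]
  | cons i w ih =>
    have h : Mword (i :: w) = Mmat i * Mword w := by simp [Mword]
    rw [h, Matrix.det_mul]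
    have hdi : (Mmat i).det = 1 / 125 := by
      fin_cases i <;>
        · simp [Mmat, M0_eq, M1_eq, M2_eq, Matrix.det_fin_three,
            Matrix.vecHead, Matrix.vecTail]
          norm_num
    rw [hdi]
    simpa using ih

/-- For every word `w`: `S^(w) = (1,1,1)z > 0`, each `τ_j = (1,1,1)(z_j + (1/3)z) > 0`,
there is a unique triple `(b₀,b₁,b₂)` with
`∑_j b_j (z_j + (1/3)z)/τ_j = z/((1,1,1)z)`, this unique solution is given by
`b_j = (1,1,1)((1/6)z + (1/2)z_j)/((1,1,1)z) = b_j^(w)`, and it satisfies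
`b₀ + b₁ + b₂ = 1`. -/
theorem stmt_10 (w : List (Fin 3)) :
    0 < Sw w ∧
    (∀ j : Fin 3, 0 < tauw w j) ∧
    (∃! b : Fin 3 → ℝ,
      ∑ j : Fin 3, (b j / tauw w j) • (zcol w j + (1 / 3 : ℝ) • zvec w) =
        (Sw w)⁻¹ • zvec w) ∧
    (∑ j : Fin 3, (bwt w j / tauw w j) • (zcol w j + (1 / 3 : ℝ) • zvec w) =
        (Sw w)⁻¹ • zvec w) ∧
    (∀ j : Fin 3,
      bwt w j = (∑ i : Fin 3, ((1 / 6) * zvec w i + (1 / 2) * zcol w j i)) / Sw w) ∧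
    (∑ j : Fin 3, bwt w j = 1) := by
  obtain ⟨htau, -⟩ := tau_pos w
  have hS : 0 < Sw w := by
    rw [Sw_eq]; have := htau 0; have := htau 1; have := htau 2; linarith
  have hSne : Sw w ≠ 0 := ne_of_gt hS
  have hbwt : ∀ j : Fin 3, bwt w j = tauw w j / (2 * Sw w) := by
    intro j
    rw [bwt, tau_eq]
    field_simp
    ring
  have hbt : ∀ j : Fin 3, bwt w j / tauw w j = 1 / (2 * Sw w) := by
    intro j
    rw [hbwt j, div_div, mul_comm (2 * Sw w) (tauw w j), ← div_div,
      div_self (ne_of_gt (htau j))]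
  have hmain : ∑ j : Fin 3, (bwt w j / tauw w j) • (zcol w j + (1 / 3 : ℝ) • zvec w) =
      (Sw w)⁻¹ • zvec w := by
    funext i
    have hz : zvec w i = zcol w 0 i + zcol w 1 i + zcol w 2 i := by
      simp [zvec, zcol, Fin.sum_univ_three]
    simp only [Fin.sum_univ_three, Pi.add_apply, Pi.smul_apply, smul_eq_mul, hbt]
    rw [hz]
    field_simp
    ring
  refine ⟨hS, htau, ⟨bwt w, hmain, ?_⟩, hmain, ?_, ?_⟩
  · -- uniqueness
    intro b hb
    have hpt : ∀ i : Fin 3,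
        (b 0 / tauw w 0 - bwt w 0 / tauw w 0) * (zcol w 0 i + 1 / 3 * zvec w i) +
        (b 1 / tauw w 1 - bwt w 1 / tauw w 1) * (zcol w 1 i + 1 / 3 * zvec w i) +
        (b 2 / tauw w 2 - bwt w 2 / tauw w 2) * (zcol w 2 i + 1 / 3 * zvec w i) = 0 := by
      intro i
      have h1 := congrFun hb i
      have h2 := congrFun hmain i
      simp only [Fin.sum_univ_three, Pi.add_apply, Pi.smul_apply, smul_eq_mul] at h1 h2
      linear_combination h1 - h2
    obtain ⟨e, he⟩ : ∃ e : Fin 3 → ℝ,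
        e = fun j => b j / tauw w j - bwt w j / tauw w j := ⟨_, rfl⟩
    obtain ⟨s, hs⟩ : ∃ s : ℝ, s = e 0 + e 1 + e 2 := ⟨_, rfl⟩
    obtain ⟨v, hv⟩ : ∃ v : Fin 3 → ℝ, v = fun k => e k + s / 3 := ⟨_, rfl⟩
    have hmv : (Mword w).mulVec v = 0 := by
      funext i
      have hz : zvec w i = zcol w 0 i + zcol w 1 i + zcol w 2 i := by
        simp [zvec, zcol, Fin.sum_univ_three]
      have hthis := hpt i
      rw [hz] at hthis
      have hc0 : zcol w 0 i = Mword w i 0 := rfl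
      have hc1 : zcol w 1 i = Mword w i 1 := rfl
      have hc2 : zcol w 2 i = Mword w i 2 := rfl
      rw [hc0, hc1, hc2] at hthis
      simp only [Matrix.mulVec, dotProduct, Fin.sum_univ_three, hv, hs, he,
        Pi.zero_apply]
      linear_combination hthis
    have hv0 : v = 0 := by
      have hu : IsUnit (Mword w).det := isUnit_iff_ne_zero.2 (det_Mword w)
      calc v = (1 : Matrix (Fin 3) (Fin 3) ℝ).mulVec v := by simp
        _ = ((Mword w)⁻¹ * Mword w).mulVec v := by rw [Matrix.nonsing_inv_mul _ hu]
        _ = (Mword w)⁻¹.mulVec ((Mword w).mulVec v) := by rw [← Matrix.mulVec_mulVec]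
        _ = 0 := by rw [hmv]; simp
    have hvk : ∀ k : Fin 3, e k + s / 3 = 0 := by
      intro k
      have := congrFun hv0 k
      simpa [hv] using this
    have hs0 : s = 0 := by
      have k0 := hvk 0; have k1 := hvk 1; have k2 := hvk 2
      linarith [hs, k0, k1, k2]
    have he0 : ∀ k : Fin 3, e k = 0 := by
      intro k; have := hvk k; rw [hs0] at this; linarith
    funext j
    have hej := he0 j
    rw [he] at hej
    simp only at hej
    have ht : tauw w j ≠ 0 := ne_of_gt (htau j)
    have h' : b j / tauw w j = bwt w j / tauw w j := by linarith
    rw [div_eq_div_iff ht ht] at h'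
    exact mul_right_cancel₀ ht h'
  · -- alternative formula for bwt
    intro j
    rw [hbwt j]
    have h1 : ∑ i : Fin 3, ((1 / 6) * zvec w i + (1 / 2) * zcol w j i)
        = Sw w / 6 + cw w j / 2 := by
      simp [Sw, cw, zvec, zcol, Fin.sum_univ_three]; ring
    rw [h1, tau_eq]
    field_simp
    ring
  · -- sum of weights is 1
    have hsum : tauw w 0 + tauw w 1 + tauw w 2 = 2 * Sw w := by rw [Sw_eq]; ring
    rw [Fin.sum_univ_three, hbwt 0, hbwt 1, hbwt 2, ← add_div, ← add_div,
      hsum, div_self (by positivity)]
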